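/- Let d ≥ 1, k ≥ 2, C > 0 and Δ̄ ∈ (0,1). Define ŝ : ℝ^d → ℝ by ŝ(w) = (2π)^{-d/2} e^{-Δ̄²‖w‖²/2} if ‖w‖₂ ≤ (√(C ln k) + √d)/Δ̄ and ŝ(w) = 0 otherwise, and let s be the inverse Fourier transform of ŝ. Then for all z ∈ ℝ^d, |s(z) − γ_{Δ̄}(z)| ≤ (2πΔ̄²)^{-d/2}·k^{-C/2}. -/

import Mathlib

open MeasureTheory Real
open scoped RealInnerProductSpace

/-- The density of the centered spherical Gaussian on `ℝ^d` whose one-dimensional marginals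
have variance `σ²`: `γ_σ(z) = (2πσ²)^(-d/2) exp(-‖z‖²/(2σ²))`. -/
noncomputable def gaussDensity (d : ℕ) (σ : ℝ) (z : EuclideanSpace ℝ (Fin d)) : ℝ :=
  (2 * π * σ ^ 2) ^ (-(d : ℝ) / 2) * Real.exp (-‖z‖ ^ 2 / (2 * σ ^ 2))

/-- `ŝ(w) = (2π)^(-d/2) e^(-Δ̄²‖w‖²/2)` on the ball `‖w‖ ≤ (√(C ln k)+√d)/Δ̄`, and `0` outside. -/
noncomputable def sHat (d k : ℕ) (C Δ : ℝ) (w : EuclideanSpace ℝ (Fin d)) : ℝ :=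
  if ‖w‖ ≤ (Real.sqrt (C * Real.log k) + Real.sqrt d) / Δ then
    (2 * π) ^ (-(d : ℝ) / 2) * Real.exp (-Δ ^ 2 * ‖w‖ ^ 2 / 2)
  else 0

/-- The inverse Fourier transform `s(z) = (2π)^(-d/2) ∫ ŝ(w) e^(i⟨z,w⟩) dw` of `ŝ`,
under the convention `f̂(ξ) = (2π)^(-d/2) ∫ f(x) e^(-i⟨ξ,x⟩) dx`. -/
noncomputable def sFun (d k : ℕ) (C Δ : ℝ) (z : EuclideanSpace ℝ (Fin d)) : ℂ :=
  ((2 * π : ℝ) ^ (-(d : ℝ) / 2) : ℝ) *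
    ∫ w : EuclideanSpace ℝ (Fin d),
      (sHat d k C Δ w : ℂ) * Complex.exp ((⟪z, w⟫ : ℝ) * Complex.I)

set_option maxHeartbeats 1000000 in
/-- With `ŝ` the truncation of the Fourier transform of `γ_{Δ̄}` to the ball of
radius `(√(C ln k)+√d)/Δ̄` and `s` its inverse Fourier transform, for all `z ∈ ℝ^d`,
`|s(z) − γ_{Δ̄}(z)| ≤ (2πΔ̄²)^(-d/2)·k^(-C/2)`. -/
theorem truncated_deconvolution_error (d k : ℕ) (hd : 1 ≤ d) (hk : 2 ≤ k)
    (C : ℝ) (hC : 0 < C) (Δ : ℝ) (hΔ : 0 < Δ) (hΔ1 : Δ < 1)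
    (z : EuclideanSpace ℝ (Fin d)) :
    ‖sFun d k C Δ z - (gaussDensity d Δ z : ℝ)‖ ≤
      (2 * π * Δ ^ 2) ^ (-(d : ℝ) / 2) * (k : ℝ) ^ (-C / 2) := by
  classical
  have hπ : (0:ℝ) < π := Real.pi_pos
  have hk1 : (1:ℝ) < k := by exact_mod_cast lt_of_lt_of_le one_lt_two (by exact_mod_cast hk)
  have hlogk : 0 < Real.log k := Real.log_pos hk1
  set u : ℝ := Real.sqrt (C * Real.log k) with hu
  have hu0 : 0 < u := Real.sqrt_pos.2 (by positivity)
  have hu2 : u ^ 2 = C * Real.log k := Real.sq_sqrt (by positivity)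
  have hd0 : (0:ℝ) < d := by exact_mod_cast hd
  have hsd : 0 < Real.sqrt d := Real.sqrt_pos.2 hd0
  have hsd2 : Real.sqrt d ^ 2 = d := Real.sq_sqrt hd0.le
  set R : ℝ := (u + Real.sqrt d) / Δ with hR
  have hR0 : 0 < R := by positivity
  have hΔR : Δ * R = u + Real.sqrt d := by
    rw [hR]; field_simp
  set b : ℝ := Δ ^ 2 / 2 with hb
  have hb0 : 0 < b := by positivity
  set f : (EuclideanSpace ℝ (Fin d)) → ℂ := fun w => Complex.exp (-(b:ℂ) * ‖w‖ ^ 2 + Complex.I * (⟪z, w⟫ : ℝ)) with hf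
  have hf_int : Integrable f :=
    GaussianFourier.integrable_cexp_neg_mul_sq_norm_add (by simpa using hb0) Complex.I z
  have hnormf : ∀ w, ‖f w‖ = Real.exp (-b * ‖w‖ ^ 2) := by
    intro w
    rw [hf]
    rw [Complex.norm_exp]
    congr 1
    rw [show -(b:ℂ) * (‖w‖:ℂ) ^ 2 + Complex.I * ((⟪z, w⟫ : ℝ):ℂ)
        = Complex.ofReal (-b * ‖w‖ ^ 2) + ((⟪z, w⟫ : ℝ):ℂ) * Complex.I by push_cast; ring]
    simp
    left
    norm_cast
  -- the ball and the indicator representation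
  set B : Set (EuclideanSpace ℝ (Fin d)) := Metric.closedBall (0:(EuclideanSpace ℝ (Fin d))) R with hBdef
  have hBmeas : MeasurableSet B := measurableSet_closedBall
  set c0 : ℝ := (2 * π) ^ (-(d:ℝ)/2) with hc0
  have hc00 : 0 < c0 := Real.rpow_pos_of_pos (by positivity) _
  have hcond : (Real.sqrt (C * Real.log k) + Real.sqrt d) / Δ = R := by rw [hR]
  have hpoint : ∀ w : (EuclideanSpace ℝ (Fin d)), (sHat d k C Δ w : ℂ) * Complex.exp ((⟪z, w⟫ : ℝ) * Complex.I)
      = B.indicator (fun w => (c0:ℂ) * f w) w := by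
    intro w
    rw [Set.indicator_apply]
    simp only [hBdef, Metric.mem_closedBall, dist_zero_right, sHat, hcond]
    split_ifs with h
    · rw [hf]
      push_cast
      rw [mul_assoc, ← Complex.exp_add]
      congr 2
      push_cast
      rw [hb]
      push_cast
      ring
    · simp
  have hsplit : (∫ w in B, f w) + ∫ w in Bᶜ, f w = ∫ w, f w :=
    integral_add_compl hBmeas hf_int
  have hsFun : sFun d k C Δ z = (c0:ℂ) * ((c0:ℂ) * ∫ w in B, f w) := by
    rw [sFun]
    congr 1
    calc (∫ w, (sHat d k C Δ w : ℂ) * Complex.exp ((⟪z, w⟫ : ℝ) * Complex.I))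
        = ∫ w, B.indicator (fun w => (c0:ℂ) * f w) w := by simp_rw [hpoint]
      _ = ∫ w in B, (c0:ℂ) * f w := integral_indicator hBmeas
      _ = (c0:ℂ) * ∫ w in B, f w := integral_const_mul _ _
  -- full Gaussian integral
  have hfull : (∫ w, f w) = (((2*π/Δ^2) ^ ((d:ℝ)/2) * Real.exp (-‖z‖^2/(2*Δ^2)) : ℝ) : ℂ) := by
    have key := GaussianFourier.integral_cexp_neg_mul_sq_norm_add (V := EuclideanSpace ℝ (Fin d)) (b := ((b:ℝ):ℂ))
      (by simpa using hb0) Complex.I z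
    rw [hf]
    rw [key]
    rw [Complex.I_sq, finrank_euclideanSpace_fin]
    have h1 : (↑π / ((b:ℝ):ℂ)) = (((π / b : ℝ)):ℂ) := by push_cast; ring
    have h2 : ((d:ℂ)/2) = (((d:ℝ)/2 : ℝ) : ℂ) := by push_cast; ring
    rw [h1, h2, ← Complex.ofReal_cpow (by positivity)]
    have h3 : (-1 * (‖z‖:ℂ)^2 / (4 * ((b:ℝ):ℂ))) = (((-‖z‖^2/(2*Δ^2) : ℝ)):ℂ) := by
      rw [hb]; push_cast
      field_simp
      ring
    rw [h3, ← Complex.ofReal_exp]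
    push_cast
    rw [hb]
    rw [show π / (Δ^2/2) = 2*π/Δ^2 by field_simp]
  -- arithmetic identity for the constant
  have e1 : c0 = (((2*π:ℝ)) ^ ((d:ℝ)/2))⁻¹ := by
    rw [hc0, neg_div, Real.rpow_neg (by positivity)]
  have e2 : ((2*π*Δ^2 : ℝ)) ^ (-(d:ℝ)/2)
      = (((2*π:ℝ)) ^ ((d:ℝ)/2) * ((Δ^2:ℝ)) ^ ((d:ℝ)/2))⁻¹ := by
    rw [neg_div, Real.rpow_neg (by positivity), Real.mul_rpow (by positivity) (by positivity)]
  have harith1 : c0 * (c0 * ((2*π/Δ^2) ^ ((d:ℝ)/2))) = (2*π*Δ^2) ^ (-(d:ℝ)/2) := by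
    rw [e1, e2, Real.div_rpow (by positivity) (by positivity)]
    have hA : ((2*π:ℝ)) ^ ((d:ℝ)/2) ≠ 0 := by positivity
    have hQ : ((Δ^2:ℝ)) ^ ((d:ℝ)/2) ≠ 0 := by positivity
    field_simp
  have hγ : ((gaussDensity d Δ z : ℝ) : ℂ) = (c0:ℂ) * ((c0:ℂ) * ∫ w, f w) := by
    rw [hfull]
    norm_cast
    rw [gaussDensity, ← harith1]
    ring
  have hdiff : sFun d k C Δ z - ((gaussDensity d Δ z : ℝ) : ℂ)
      = -((c0:ℂ) * ((c0:ℂ) * ∫ w in Bᶜ, f w)) := by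
    rw [hsFun, hγ, ← hsplit]
    ring
  -- integrability of real Gaussians
  have hint : ∀ c : ℝ, 0 < c → Integrable (fun w : (EuclideanSpace ℝ (Fin d)) => Real.exp (-c * ‖w‖ ^ 2)) := by
    intro c hc
    have h1 : Integrable (fun w : (EuclideanSpace ℝ (Fin d)) => Complex.exp (-(c:ℂ) * ‖w‖ ^ 2 + (0:ℂ) * ⟪(0:(EuclideanSpace ℝ (Fin d))), w⟫)) :=
      GaussianFourier.integrable_cexp_neg_mul_sq_norm_add (by simpa using hc) 0 0
    refine h1.norm.congr (Filter.Eventually.of_forall fun w => ?_)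
    simp only [Complex.norm_exp]
    congr 1
    rw [show -(c:ℂ) * (‖w‖:ℂ) ^ 2 + (0:ℂ) * ((⟪(0:(EuclideanSpace ℝ (Fin d))), w⟫ : ℝ):ℂ)
        = Complex.ofReal (-c * ‖w‖ ^ 2) by push_cast; ring]
    simp
    left
    norm_cast
  -- the Chernoff parameters
  set a : ℝ := (d:ℝ) / (2 * R ^ 2) with ha
  have ha0 : 0 < a := by positivity
  have hΔR2 : Δ ^ 2 * R ^ 2 = (u + Real.sqrt d) ^ 2 := by rw [← mul_pow, hΔR]
  have hba : 0 < b - a := by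
    rw [hb, ha, sub_pos, div_lt_div_iff₀ (by positivity) (by norm_num)]
    nlinarith [hΔR2, hsd2, mul_pos hu0 hsd]
  -- tail bound
  have htail : (∫ w in Bᶜ, Real.exp (-b * ‖w‖ ^ 2))
      ≤ Real.exp (-(b - a) * R ^ 2) * (π / a) ^ ((d:ℝ)/2) := by
    calc (∫ w in Bᶜ, Real.exp (-b * ‖w‖ ^ 2))
        ≤ ∫ w in Bᶜ, Real.exp (-(b - a) * R ^ 2) * Real.exp (-a * ‖w‖ ^ 2) := by
          refine setIntegral_mono_on ((hint b hb0).integrableOn)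
            (((hint a ha0).const_mul _).integrableOn) hBmeas.compl fun w hw => ?_
          have hwR : R ≤ ‖w‖ := by
            have := hw
            simp only [hBdef, Set.mem_compl_iff, Metric.mem_closedBall, dist_zero_right,
              not_le] at this
            exact this.le
          rw [← Real.exp_add]
          apply Real.exp_le_exp.2
          have h2 : (b - a) * R ^ 2 ≤ (b - a) * ‖w‖ ^ 2 :=
            mul_le_mul_of_nonneg_left (pow_le_pow_left₀ hR0.le hwR 2) hba.le
          linarith
      _ = Real.exp (-(b - a) * R ^ 2) * ∫ w in Bᶜ, Real.exp (-a * ‖w‖ ^ 2) :=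
          integral_const_mul _ _
      _ ≤ Real.exp (-(b - a) * R ^ 2) * ∫ w, Real.exp (-a * ‖w‖ ^ 2) := by
          refine mul_le_mul_of_nonneg_left (setIntegral_le_integral (hint a ha0)
            (Filter.Eventually.of_forall fun w => (Real.exp_pos _).le)) (Real.exp_pos _).le
      _ = Real.exp (-(b - a) * R ^ 2) * (π / a) ^ ((d:ℝ)/2) := by
          rw [show (∫ w : (EuclideanSpace ℝ (Fin d)), Real.exp (-a * ‖w‖ ^ 2))
              = (π / a) ^ (((Module.finrank ℝ (EuclideanSpace ℝ (Fin d)) : ℝ)) / 2) from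
            GaussianFourier.integral_rexp_neg_mul_sq_norm ha0, finrank_euclideanSpace_fin]
  -- exponent computations
  have hbaR : (b - a) * R ^ 2 = u ^ 2 / 2 + u * Real.sqrt d := by
    have hR2 : R ^ 2 ≠ 0 := by positivity
    rw [hb, ha]
    field_simp
    nlinarith [hΔR2, hsd2]
  have hk_pow : (k:ℝ) ^ (-C/2) = Real.exp (-(u ^ 2) / 2) := by
    rw [Real.rpow_def_of_pos (by positivity), hu2, Real.log]
    ring_nf
  -- key concentration inequality
  have hQS : (Δ ^ 2) ^ ((d:ℝ)/2) * (R ^ 2 / (d:ℝ)) ^ ((d:ℝ)/2) ≤ Real.exp (u * Real.sqrt d) := by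
    rw [← Real.mul_rpow (by positivity) (by positivity)]
    have hbase : Δ ^ 2 * (R ^ 2 / (d:ℝ)) = (1 + u / Real.sqrt d) ^ 2 := by
      rw [← mul_div_assoc, hΔR2]
      rw [show (1 + u / Real.sqrt d) = (Real.sqrt d + u) / Real.sqrt d by field_simp]
      rw [div_pow, hsd2]
      ring_nf
    rw [hbase]
    have h2 : ((1 + u / Real.sqrt d) ^ 2) ^ ((d:ℝ)/2) = (1 + u / Real.sqrt d) ^ (d:ℝ) := by
      rw [← Real.rpow_natCast (1 + u / Real.sqrt d) 2, ← Real.rpow_mul (by positivity)]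
      congr 1
      push_cast
      ring
    rw [h2]
    calc (1 + u / Real.sqrt d) ^ (d:ℝ)
        ≤ (Real.exp (u / Real.sqrt d)) ^ (d:ℝ) :=
          Real.rpow_le_rpow (by positivity)
            (by linarith [Real.add_one_le_exp (u / Real.sqrt d)]) (by positivity)
      _ = Real.exp (u * Real.sqrt d) := by
          rw [← Real.exp_mul]
          congr 1
          field_simp
          linear_combination (-1) * hsd2
  -- the final arithmetic bound
  have hfinal : c0 * (c0 * (Real.exp (-(b - a) * R ^ 2) * (π / a) ^ ((d:ℝ)/2)))
      ≤ (2 * π * Δ ^ 2) ^ (-(d:ℝ)/2) * (k:ℝ) ^ (-C/2) := by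
    have hπa : π / a = (2 * π) * (R ^ 2 / (d:ℝ)) := by rw [ha]; field_simp
    rw [hπa, Real.mul_rpow (by positivity) (by positivity), neg_mul, hbaR, hk_pow, e1, e2]
    rw [show -(u ^ 2 / 2 + u * Real.sqrt d) = -(u ^ 2) / 2 + -(u * Real.sqrt d) by ring,
      Real.exp_add]
    set A := (2 * π : ℝ) ^ ((d:ℝ)/2) with hA
    set Q := ((Δ ^ 2 : ℝ)) ^ ((d:ℝ)/2) with hQdef
    set S := ((R ^ 2 / (d:ℝ) : ℝ)) ^ ((d:ℝ)/2) with hS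
    set X := Real.exp (-(u ^ 2) / 2) with hX
    set E := Real.exp (u * Real.sqrt d) with hE
    have hEneg : Real.exp (-(u * Real.sqrt d)) = E⁻¹ := Real.exp_neg _
    rw [hEneg]
    have hA0 : (0:ℝ) < A := Real.rpow_pos_of_pos (by positivity) _
    have hQ0 : (0:ℝ) < Q := Real.rpow_pos_of_pos (by positivity) _
    have hS0 : (0:ℝ) < S := Real.rpow_pos_of_pos (by positivity) _
    have hX0 : (0:ℝ) < X := Real.exp_pos _
    have hE0 : (0:ℝ) < E := Real.exp_pos _
    calc A⁻¹ * (A⁻¹ * ((X * E⁻¹) * (A * S)))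
        = ((A * Q)⁻¹ * X) * ((Q * S) / E) := by field_simp
      _ ≤ ((A * Q)⁻¹ * X) * 1 := by
          refine mul_le_mul_of_nonneg_left ?_ (by positivity)
          rw [div_le_one hE0]
          exact hQS
      _ = (A * Q)⁻¹ * X := mul_one _
  -- put everything together
  have hTailabs : ‖∫ w in Bᶜ, f w‖ ≤ ∫ w in Bᶜ, Real.exp (-b * ‖w‖ ^ 2) := by
    refine (norm_integral_le_integral_norm f).trans (le_of_eq ?_)
    simp_rw [hnormf]
  rw [hdiff, norm_neg, norm_mul, norm_mul, Complex.norm_real, Real.norm_of_nonneg hc00.le]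
  calc c0 * (c0 * ‖∫ w in Bᶜ, f w‖)
      ≤ c0 * (c0 * (Real.exp (-(b - a) * R ^ 2) * (π / a) ^ ((d:ℝ)/2))) := by
        have := hTailabs.trans htail
        gcongr
    _ ≤ (2 * π * Δ ^ 2) ^ (-(d:ℝ)/2) * (k:ℝ) ^ (-C/2) := hfinal
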